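/- arXiv:0905.1834 — 4 statements merged into one kernel-verified Lean document; each statement's English description precedes it below -/
import Mathlib

section
/- Let A be an n×n complex matrix and U a Hermitian matrix satisfying Lyapunov's equation A*U + UA = V with V positive definite. Then every eigenvalue of A has nonzero real part (A has no purely imaginary eigenvalues). -/
open scoped Matrix ComplexOrder

theorem no_purely_imaginary_eigenvalue {n : ℕ} (A U V : Matrix (Fin n) (Fin n) ℂ)
    (hU : U.IsHermitian) (hLyap : Aᴴ * U + U * A = V) (hV : V.PosDef) :
    ∀ μ ∈ spectrum ℂ A, μ.re ≠ 0 := by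
  intro μ hμ hre
  rw [← AlgEquiv.spectrum_eq (Matrix.toLinAlgEquiv'),
    ← Module.End.hasEigenvalue_iff_mem_spectrum] at hμ
  obtain ⟨x, hx⟩ := hμ.exists_hasEigenvector
  have hAx : A *ᵥ x = μ • x := by
    have := hx.apply_eq_smul
    rwa [Matrix.toLinAlgEquiv'_apply] at this
  have hx0 : x ≠ 0 := hx.right
  have hpos := hV.dotProduct_mulVec_pos hx0
  have hcalc : star x ⬝ᵥ V *ᵥ x = (starRingEnd ℂ μ + μ) * (star x ⬝ᵥ U *ᵥ x) := by
    rw [← hLyap, Matrix.add_mulVec, dotProduct_add, ← Matrix.mulVec_mulVec,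
      ← Matrix.mulVec_mulVec, Matrix.dotProduct_mulVec (star x) Aᴴ,
      ← Matrix.star_mulVec, hAx]
    simp [Matrix.mulVec_smul, dotProduct_smul, smul_dotProduct, add_mul, mul_comm]
  have hzero : starRingEnd ℂ μ + μ = 0 := by
    apply Complex.ext <;> simp [hre]
  rw [hcalc, hzero, zero_mul] at hpos
  exact lt_irrefl _ hpos
end

section
/- Let A be an n×n complex matrix and U a Hermitian matrix with A*U + UA = V positive definite. If φ is an eigenvector of A with eigenvalue λ satisfying Re λ > 0, then ⟨Uφ,φ⟩ > 0. Dually, if Re λ < 0 then ⟨Uφ,φ⟩ < 0. -/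
open scoped Matrix ComplexOrder

theorem sign_of_form_on_eigenvector {n : ℕ} (A U V : Matrix (Fin n) (Fin n) ℂ)
    (hU : U.IsHermitian) (hLyap : Aᴴ * U + U * A = V) (hV : V.PosDef)
    (φ : Fin n → ℂ) (hφ : φ ≠ 0) (μ : ℂ) (heig : A.mulVec φ = μ • φ) :
    (0 < μ.re → 0 < (dotProduct (star φ) (U.mulVec φ)).re) ∧
    (μ.re < 0 → (dotProduct (star φ) (U.mulVec φ)).re < 0) := by
  set q := dotProduct (star φ) (U.mulVec φ) with hqdef
  have h1 : dotProduct (star φ) ((Aᴴ * U).mulVec φ)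
      = starRingEnd ℂ μ * q := by
    rw [← Matrix.mulVec_mulVec, Matrix.dotProduct_mulVec, ← Matrix.star_mulVec, heig]
    simp [dotProduct_smul, hqdef, smul_dotProduct]
  have h2 : dotProduct (star φ) ((U * A).mulVec φ) = μ * q := by
    rw [← Matrix.mulVec_mulVec, heig, Matrix.mulVec_smul]
    simp [hqdef, dotProduct_smul]
  have hsum : dotProduct (star φ) (V.mulVec φ)
      = (starRingEnd ℂ μ + μ) * q := by
    rw [← hLyap, Matrix.add_mulVec, dotProduct_add, h1, h2, add_mul]
  have hpos : 0 < dotProduct (star φ) (V.mulVec φ) := hV.dotProduct_mulVec_pos hφ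
  have hre : 0 < (dotProduct (star φ) (V.mulVec φ)).re := by
    rw [Complex.lt_def] at hpos
    simpa using hpos.1
  have hkey : 0 < 2 * μ.re * q.re := by
    have : ((starRingEnd ℂ μ + μ) * q).re = 2 * μ.re * q.re := by
      have : starRingEnd ℂ μ + μ = ((2 * μ.re : ℝ) : ℂ) := by
        rw [add_comm, Complex.add_conj]
      rw [this, Complex.re_ofReal_mul]
    rw [hsum, this] at hre
    exact hre
  constructor
  · intro h; nlinarith
  · intro h; nlinarith
end

section
/- Let X and Y be finite-dimensional neutral subspaces of an indefinite inner product space that are skewly linked. Then for every basis φ₁,…,φ_m of X there exists a basis ψ₁,…,ψ_m of Y such that [φᵢ,ψⱼ] = δᵢⱼ for all i,j. -/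
theorem skewly_linked_dual_basis {V : Type*} [AddCommGroup V] [Module ℂ V]
    (B : V →ₗ[ℂ] V →ₗ⋆[ℂ] ℂ)
    (hHerm : ∀ x y : V, B x y = (starRingEnd ℂ) (B y x))
    (m : ℕ) (X Y : Submodule ℂ V) [FiniteDimensional ℂ Y]
    (hXneutral : ∀ φ ∈ X, B φ φ = 0)
    (hYneutral : ∀ φ ∈ Y, B φ φ = 0)
    (hXY : X ⊓ Y = ⊥)
    (hYdim : Module.finrank ℂ Y = m)
    (hnondeg : ∀ φ ∈ X ⊔ Y, (∀ ψ ∈ X ⊔ Y, B φ ψ = 0) → φ = 0)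
    (φb : Module.Basis (Fin m) ℂ X) :
    ∃ ψb : Module.Basis (Fin m) ℂ Y,
      ∀ i j : Fin m, B (φb i : V) (ψb j : V) = if i = j then 1 else 0 := by
  classical
  -- The form vanishes on Y × Y by polarization
  have hYY : ∀ x ∈ Y, ∀ y ∈ Y, B x y = 0 := by
    intro x hx y hy
    have h1 := hYneutral (x + y) (Y.add_mem hx hy)
    have h2 := hYneutral (x + (Complex.I • y)) (Y.add_mem hx (Y.smul_mem _ hy))
    have hxx := hYneutral x hx
    have hyy := hYneutral y hy
    simp only [map_add, LinearMap.add_apply, map_smulₛₗ, map_smul, LinearMap.smul_apply,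
      Complex.conj_I, smul_eq_mul, hxx, hyy, mul_zero, zero_add, add_zero, neg_mul, RingHom.id_apply] at h1 h2
    have h3 : (-2 * Complex.I) * B x y = 0 := by
      linear_combination h2 - Complex.I * h1
    rcases mul_eq_zero.mp h3 with h | h
    · exact absurd h (by simp [Complex.I_ne_zero])
    · exact h
  let S : Y →ₗ[ℂ] (Fin m → ℂ) :=
    { toFun := fun ψ i => (starRingEnd ℂ) (B (φb i : V) (ψ : V))
      map_add' := by intro a b; funext i; simp
      map_smul' := by intro c a; funext i; simp [mul_comm] }
  have hSapp : ∀ (ψ : Y) (i : Fin m), S ψ i = (starRingEnd ℂ) (B (φb i : V) (ψ : V)) :=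
    fun _ _ => rfl
  have hSinj : Function.Injective S := by
    refine (injective_iff_map_eq_zero S).mpr ?_
    intro ψ hψ
    have hzero : ∀ i, B (φb i : V) (ψ : V) = 0 := by
      intro i
      have h := congrFun hψ i
      rw [hSapp] at h
      simpa using h
    have hX0 : ∀ x ∈ X, B x (ψ : V) = 0 := by
      intro x hx
      have hrep : (⟨x, hx⟩ : X) = ∑ i, φb.repr ⟨x, hx⟩ i • φb i := (φb.sum_repr _).symm
      have hx' : x = ∑ i, φb.repr ⟨x, hx⟩ i • (φb i : V) := by
        have := congrArg (Subtype.val) hrep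
        simpa only [Submodule.coe_sum, Submodule.coe_smul] using this
      rw [hx']
      simp [LinearMap.sum_apply, hzero]
    have hψmem : (ψ : V) ∈ X ⊔ Y := Submodule.mem_sup_right ψ.2
    have hψ0 : (ψ : V) = 0 := by
      refine hnondeg _ hψmem ?_
      intro z hz
      rcases Submodule.mem_sup.mp hz with ⟨a, ha, b, hb, rfl⟩
      have hBa : B (ψ : V) a = 0 := by
        rw [hHerm]; rw [hX0 a ha]; simp
      have hBb : B (ψ : V) b = 0 := hYY _ ψ.2 _ hb
      simp [hBa, hBb]
    exact Subtype.ext hψ0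
  have hdim : Module.finrank ℂ Y = Module.finrank ℂ (Fin m → ℂ) := by
    simp [hYdim]
  let e : Y ≃ₗ[ℂ] (Fin m → ℂ) := LinearMap.linearEquivOfInjective S hSinj hdim
  let ψb : Module.Basis (Fin m) ℂ Y := (Pi.basisFun ℂ (Fin m)).map e.symm
  refine ⟨ψb, ?_⟩
  intro i j
  have hS : S (ψb j) = Pi.basisFun ℂ (Fin m) j := by
    have : e (ψb j) = Pi.basisFun ℂ (Fin m) j := by
      simp [ψb, Module.Basis.map_apply]
    have he : e (ψb j) = S (ψb j) := LinearMap.linearEquivOfInjective_apply hSinj hdim _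
    rw [← he, this]
  have h2 := congrFun hS i
  rw [hSapp] at h2
  have h3 := congrArg (starRingEnd ℂ) h2
  simp only [Complex.conj_conj] at h3
  rw [h3]
  simp [Pi.basisFun_apply, Pi.single_apply, apply_ite, eq_comm]
end

section
/- Let U, V be Hermitian n×n matrices and A an n×n matrix satisfying A*U + UA = V with V positive definite. If U is negative definite, then every eigenvalue of A has negative real part; conversely, if every eigenvalue of A has negative real part and U solves the equation, then U is negative definite. -/
open scoped Matrix ComplexOrder
open Filter NormedSpace Topology

attribute [local instance] Matrix.linftyOpNormedRing Matrix.linftyOpNormedAlgebra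



noncomputable def appCLM {n : ℕ} (x : Fin n → ℂ) : Matrix (Fin n) (Fin n) ℂ →L[ℝ] (Fin n → ℂ) :=
  LinearMap.toContinuousLinearMap
    { toFun := fun M => M.mulVec x
      map_add' := fun M N => Matrix.add_mulVec M N x
      map_smul' := fun r M => by
        ext i
        simp [Matrix.mulVec, dotProduct, Finset.smul_sum, Finset.mul_sum, smul_mul_assoc, mul_assoc] }

@[simp] lemma appCLM_apply {n : ℕ} (x : Fin n → ℂ) (M : Matrix (Fin n) (Fin n) ℂ) :
    appCLM x M = M.mulVec x := rfl

lemma aux_real (k : ℕ) {c : ℝ} (hc : c < 0) :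
    Tendsto (fun t : ℝ => t ^ k * Real.exp (c * t)) atTop (𝓝 0) := by
  have hc' : 0 < -c := by linarith
  have h1 : Tendsto (fun t : ℝ => ((-c) * t) ^ k * Real.exp (-((-c) * t))) atTop (𝓝 0) :=
    (Real.tendsto_pow_mul_exp_neg_atTop_nhds_zero k).comp (tendsto_id.const_mul_atTop hc')
  have h2 := h1.const_mul (((-c) ^ k)⁻¹)
  rw [mul_zero] at h2
  refine h2.congr fun t => ?_
  have hck : ((-c) : ℝ) ^ k ≠ 0 := pow_ne_zero _ (by linarith)
  field_simp [mul_pow]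
  ring_nf

lemma decay {n : ℕ} (A : Matrix (Fin n) (Fin n) ℂ)
    (hA : ∀ μ ∈ spectrum ℂ A, μ.re < 0) (x : Fin n → ℂ) :
    Tendsto (fun t : ℝ => (exp (t • A)).mulVec x) atTop (𝓝 0) := by
  set S : Submodule ℂ (Fin n → ℂ) :=
    { carrier := {v | Tendsto (fun t : ℝ => (exp (t • A)).mulVec v) atTop (𝓝 0)}
      add_mem' := fun {a b} ha hb => by
        simpa [Matrix.mulVec_add] using ha.add hb
      zero_mem' := by simpa [Matrix.mulVec_zero] using (tendsto_const_nhds :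
        Tendsto (fun _ : ℝ => (0 : Fin n → ℂ)) atTop _)
      smul_mem' := fun c v hv => by
        simpa [Matrix.mulVec_smul] using hv.const_smul c } with hS
  suffices hx : x ∈ S from hx
  have htop := Module.End.iSup_maxGenEigenspace_eq_top (Matrix.toLinAlgEquiv' A)
  have hle : (⨆ μ, Module.End.maxGenEigenspace (Matrix.toLinAlgEquiv' A) μ) ≤ S := by
    refine iSup_le fun μ => ?_
    intro v hv
    obtain ⟨k, hk⟩ := (Module.End.mem_maxGenEigenspace _ _ _).mp hv
    set N : Matrix (Fin n) (Fin n) ℂ := A - μ • 1 with hN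
    have hNv : (N ^ k).mulVec v = 0 := by
      have h1 : (Matrix.toLinAlgEquiv' A - μ • 1) = Matrix.toLinAlgEquiv' N := by
        simp [hN, map_sub, map_smul]
      rw [h1, ← map_pow] at hk
      rw [← Matrix.toLinAlgEquiv'_apply]
      exact hk
    by_cases hμ : μ ∈ spectrum ℂ A
    · -- decay case
      have hre : μ.re < 0 := hA μ hμ
      have hterm0 : ∀ j, k ≤ j → (N ^ j).mulVec v = 0 := by
        intro j hj
        rw [← Nat.sub_add_cancel hj, pow_add, ← Matrix.mulVec_mulVec, hNv, Matrix.mulVec_zero]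
      have hsplit : ∀ t : ℝ, exp (t • A) = Complex.exp ((t : ℂ) * μ) • exp (t • N) := by
        intro t
        have hA' : t • A = ((t : ℂ) * μ) • (1 : Matrix (Fin n) (Fin n) ℂ) + t • N := by
          rw [hN]
          have hmap : (algebraMap ℝ ℂ) t = (t : ℂ) := rfl
          match_scalars <;> simp [hmap] <;> ring
        have hcomm : Commute (((t : ℂ) * μ) • (1 : Matrix (Fin n) (Fin n) ℂ)) (t • N) :=
          ((Commute.one_left (t • N)).smul_left _)
        rw [hA', Matrix.exp_add_of_commute _ _ hcomm]
        have hone : exp (((t : ℂ) * μ) • (1 : Matrix (Fin n) (Fin n) ℂ))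
            = Complex.exp ((t : ℂ) * μ) • 1 := by
          rw [← Algebra.algebraMap_eq_smul_one, Complex.exp_eq_exp_ℂ, ← Algebra.algebraMap_eq_smul_one]
          exact (map_exp (algebraMap ℂ (Matrix (Fin n) (Fin n) ℂ)) (continuous_algebraMap _ _) _).symm
        rw [hone, Matrix.smul_mul, one_mul]
      have hexpN : ∀ t : ℝ, (exp (t • N)).mulVec v
          = ∑ j ∈ Finset.range k, ((j.factorial⁻¹ : ℝ) * t ^ j) • (N ^ j).mulVec v := by
        intro t
        rw [exp_eq_tsum ℝ]
        have hsum : Summable fun j : ℕ => (j.factorial⁻¹ : ℝ) • (t • N) ^ j :=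
          expSeries_summable' (𝕂 := ℝ) (t • N)
        have hmap := (appCLM v).map_tsum hsum
        simp only [appCLM_apply] at hmap
        rw [hmap, tsum_eq_sum (s := Finset.range k) ?_]
        · refine Finset.sum_congr rfl fun j hj => ?_
          rw [smul_pow, Matrix.smul_mulVec, Matrix.smul_mulVec, smul_smul]
        · intro j hj
          have hjk : k ≤ j := by simpa using hj
          rw [smul_pow, Matrix.smul_mulVec, Matrix.smul_mulVec, hterm0 j hjk,
            smul_zero, smul_zero]
      have : ∀ t : ℝ, (exp (t • A)).mulVec v
          = ∑ j ∈ Finset.range k, Complex.exp ((t : ℂ) * μ) •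
              ((j.factorial⁻¹ : ℝ) * t ^ j) • (N ^ j).mulVec v := by
        intro t
        rw [hsplit t, Matrix.smul_mulVec, hexpN t, Finset.smul_sum]
      show Tendsto _ atTop (𝓝 0)
      rw [show (0 : Fin n → ℂ) = ∑ j ∈ Finset.range k, (0 : Fin n → ℂ) by simp]
      refine Tendsto.congr (fun t => (this t).symm) (tendsto_finset_sum _ fun j _ => ?_)
      -- each term tends to 0
      have hnorm : ∀ t : ℝ, 0 ≤ t →
          ‖Complex.exp ((t : ℂ) * μ) • ((j.factorial⁻¹ : ℝ) * t ^ j) • (N ^ j).mulVec v‖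
            ≤ ((j.factorial⁻¹ : ℝ) * ‖(N ^ j).mulVec v‖) * (t ^ j * Real.exp (μ.re * t)) := by
        intro t ht
        rw [norm_smul, norm_smul, Complex.norm_exp]
        have : ((t : ℂ) * μ).re = μ.re * t := by simp [Complex.mul_re]; ring
        rw [this, Real.norm_eq_abs, abs_mul, abs_of_nonneg (by positivity : (0:ℝ) ≤ (j.factorial⁻¹ : ℝ)),
          abs_of_nonneg (by positivity : (0:ℝ) ≤ t ^ j)]
        ring_nf
        exact le_refl _
      have hg : Tendsto (fun t : ℝ => ((j.factorial⁻¹ : ℝ) * ‖(N ^ j).mulVec v‖)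
          * (t ^ j * Real.exp (μ.re * t))) atTop (𝓝 0) := by
        simpa using (aux_real j hre).const_mul ((j.factorial⁻¹ : ℝ) * ‖(N ^ j).mulVec v‖)
      refine squeeze_zero_norm' ?_ hg
      filter_upwards [eventually_ge_atTop (0:ℝ)] with t ht using hnorm t ht
    · -- μ not in spectrum: v = 0
      have hunit : IsUnit (N ^ k) := by
        have h0 := spectrum.notMem_iff.mp hμ
        have hN' : IsUnit N := by
          have := h0.neg
          simpa [hN, Algebra.algebraMap_eq_smul_one, neg_sub] using this
        exact hN'.pow k
      obtain ⟨u, hu⟩ := hunit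
      have hv0 : v = 0 := by
        have h1 : ((↑u⁻¹ : Matrix (Fin n) (Fin n) ℂ) * (N ^ k)).mulVec v = 0 := by
          rw [← Matrix.mulVec_mulVec, hNv, Matrix.mulVec_zero]
        rwa [← hu, Units.inv_mul, Matrix.one_mulVec] at h1
      rw [hv0]; exact S.zero_mem
  exact hle (htop ▸ Submodule.mem_top)

lemma quad_id {n : ℕ} (A U : Matrix (Fin n) (Fin n) ℂ) (y : Fin n → ℂ) :
    star (A.mulVec y) ⬝ᵥ U.mulVec y + star y ⬝ᵥ U.mulVec (A.mulVec y)
      = star y ⬝ᵥ (Aᴴ * U + U * A).mulVec y := by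
  simp only [Matrix.star_mulVec, Matrix.add_mulVec, dotProduct_add,
    Matrix.dotProduct_mulVec, Matrix.vecMul_vecMul]

lemma herm_dot {n : ℕ} {U : Matrix (Fin n) (Fin n) ℂ} (hU : U.IsHermitian) (v : Fin n → ℂ) :
    (star v ⬝ᵥ U.mulVec v).im = 0 := by
  rw [← Complex.conj_eq_iff_im]
  have h : (starRingEnd ℂ) (star v ⬝ᵥ U.mulVec v) = star (star v ⬝ᵥ U.mulVec v) := rfl
  rw [h, ← Matrix.star_dotProduct, Matrix.star_mulVec, Matrix.dotProduct_mulVec, hU.eq]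

/-- `v ↦ M *ᵥ v` as a real continuous linear map. -/
noncomputable def mulVecCLM {n : ℕ} (M : Matrix (Fin n) (Fin n) ℂ) :
    (Fin n → ℂ) →L[ℝ] (Fin n → ℂ) :=
  LinearMap.toContinuousLinearMap ((Matrix.mulVecLin M).restrictScalars ℝ)

@[simp] lemma mulVecCLM_apply {n : ℕ} (M : Matrix (Fin n) (Fin n) ℂ) (v : Fin n → ℂ) :
    mulVecCLM M v = M.mulVec v := rfl

lemma key_neg {n : ℕ} (A U V : Matrix (Fin n) (Fin n) ℂ)
    (hU : U.IsHermitian) (hLyap : Aᴴ * U + U * A = V) (hV : V.PosDef)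
    (hA : ∀ μ ∈ spectrum ℂ A, μ.re < 0) (v : Fin n → ℂ) (hv : v ≠ 0) :
    (star v ⬝ᵥ U.mulVec v).re < 0 := by
  set y : ℝ → (Fin n → ℂ) := fun t => (exp (t • A)).mulVec v with hy_def
  have hE : ∀ t : ℝ, HasDerivAt (fun s : ℝ => exp (s • A)) (A * exp (t • A)) t :=
    fun t => hasDerivAt_exp_smul_const' A t
  have hy : ∀ t : ℝ, HasDerivAt y (A.mulVec (y t)) t := by
    intro t
    have h := ((appCLM v).hasFDerivAt).comp_hasDerivAt t (hE t)
    have e : A.mulVec (y t) = appCLM v (A * exp (t • A)) := by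
      rw [appCLM_apply, ← Matrix.mulVec_mulVec]
    rw [e]; exact h
  have hynz : ∀ t : ℝ, y t ≠ 0 := by
    intro t h0
    have hinv : exp (-(t • A)) * exp (t • A) = (1 : Matrix (Fin n) (Fin n) ℂ) := by
      rw [← Matrix.exp_add_of_commute _ _ ((Commute.refl (t • A)).neg_left),
        neg_add_cancel]
      exact exp_zero
    apply hv
    calc v = (exp (-(t • A)) * exp (t • A)).mulVec v := by rw [hinv, Matrix.one_mulVec]
    _ = (exp (-(t • A))).mulVec (y t) := by rw [← Matrix.mulVec_mulVec]
    _ = 0 := by rw [h0, Matrix.mulVec_zero]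
  -- component derivatives
  have hyc : ∀ (t : ℝ) (i : Fin n), HasDerivAt (fun s => y s i) ((A.mulVec (y t)) i) t := by
    intro t i
    exact ((ContinuousLinearMap.proj (R := ℝ) (φ := fun _ : Fin n => ℂ)
      i).hasFDerivAt).comp_hasDerivAt t (hy t)
  have hconj : ∀ (t : ℝ) (i : Fin n), HasDerivAt (fun s => (starRingEnd ℂ) (y s i))
      ((starRingEnd ℂ) ((A.mulVec (y t)) i)) t := by
    intro t i
    exact (Complex.conjCLE.toContinuousLinearMap.hasFDerivAt).comp_hasDerivAt t (hyc t i)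
  have hw : ∀ (t : ℝ) (i : Fin n), HasDerivAt (fun s => (U.mulVec (y s)) i)
      ((U.mulVec (A.mulVec (y t))) i) t := by
    intro t i
    exact (((ContinuousLinearMap.proj (R := ℝ) (φ := fun _ : Fin n => ℂ) i).comp
      (mulVecCLM U)).hasFDerivAt).comp_hasDerivAt t (hy t)
  set f : ℝ → ℂ := fun t => ∑ i, (starRingEnd ℂ) (y t i) * (U.mulVec (y t)) i with hf_def
  have hfd : ∀ t, f t = star (y t) ⬝ᵥ U.mulVec (y t) := fun t => rfl
  have hf : ∀ t : ℝ, HasDerivAt f (star (y t) ⬝ᵥ V.mulVec (y t)) t := by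
    intro t
    have hsum : HasDerivAt f (∑ i, ((starRingEnd ℂ) ((A.mulVec (y t)) i) * (U.mulVec (y t)) i
        + (starRingEnd ℂ) (y t i) * (U.mulVec (A.mulVec (y t))) i)) t :=
      HasDerivAt.fun_sum fun i _ => (hconj t i).mul (hw t i)
    convert hsum using 1
    rw [Finset.sum_add_distrib]
    have h1 : ∑ i, (starRingEnd ℂ) ((A.mulVec (y t)) i) * (U.mulVec (y t)) i
        = star (A.mulVec (y t)) ⬝ᵥ U.mulVec (y t) := rfl
    have h2 : ∑ i, (starRingEnd ℂ) (y t i) * (U.mulVec (A.mulVec (y t))) i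
        = star (y t) ⬝ᵥ U.mulVec (A.mulVec (y t)) := rfl
    rw [h1, h2, quad_id, hLyap]
  set F : ℝ → ℝ := fun t => (f t).re with hF_def
  have hF : ∀ t : ℝ, HasDerivAt F ((star (y t) ⬝ᵥ V.mulVec (y t)).re) t :=
    fun t => (Complex.reCLM.hasFDerivAt).comp_hasDerivAt t (hf t)
  have hmono : StrictMono F := by
    refine strictMono_of_deriv_pos fun t => ?_
    rw [(hF t).deriv]
    have := hV.dotProduct_mulVec_pos (hynz t)
    exact (Complex.lt_def.mp this).1
  have hcont : Continuous fun z : Fin n → ℂ => ((star z ⬝ᵥ U.mulVec z)).re := by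
    refine Complex.continuous_re.comp ?_
    simp only [dotProduct, Matrix.mulVec, Pi.star_apply]
    exact continuous_finset_sum _ fun i _ =>
      ((continuous_star.comp (continuous_apply i)).mul
        (continuous_finset_sum _ fun j _ => continuous_const.mul (continuous_apply j)))
  have hlim : Tendsto F atTop (𝓝 0) := by
    have hy0 : Tendsto y atTop (𝓝 0) := decay A hA v
    have h := (hcont.tendsto 0).comp hy0
    simp at h
    exact h
  have hF1 : F 1 ≤ 0 := by
    refine ge_of_tendsto hlim ?_
    filter_upwards [eventually_ge_atTop (1 : ℝ)] with t ht using hmono.monotone ht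
  have hF0 : F 0 = (star v ⬝ᵥ U.mulVec v).re := by
    have : y 0 = v := by
      rw [hy_def]
      simp [Matrix.one_mulVec]
    show (f 0).re = _
    rw [hfd 0, this]
  have : F 0 < F 1 := hmono (by norm_num)
  rw [hF0] at this
  linarith

theorem lyapunov_stability {n : ℕ} (A U V : Matrix (Fin n) (Fin n) ℂ)
    (hU : U.IsHermitian) (hLyap : Aᴴ * U + U * A = V) (hV : V.PosDef) :
    (-U).PosDef ↔ ∀ μ ∈ spectrum ℂ A, μ.re < 0 := by
  constructor
  · intro hNU μ hμ
    rw [spectrum.mem_iff] at hμ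
    have hdet : (algebraMap ℂ (Matrix (Fin n) (Fin n) ℂ) μ - A).det = 0 := by
      by_contra h
      exact hμ ((Matrix.isUnit_iff_isUnit_det _).mpr (isUnit_iff_ne_zero.mpr h))
    obtain ⟨v, hv0, hv⟩ := (Matrix.exists_mulVec_eq_zero_iff).mpr hdet
    have heig : A.mulVec v = μ • v := by
      rw [Matrix.sub_mulVec] at hv
      have h2 : (algebraMap ℂ (Matrix (Fin n) (Fin n) ℂ) μ).mulVec v = μ • v := by
        rw [Algebra.algebraMap_eq_smul_one, Matrix.smul_mulVec, Matrix.one_mulVec]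
      rw [h2] at hv
      exact (sub_eq_zero.mp hv).symm
    set c : ℂ := star v ⬝ᵥ U.mulVec v with hc
    have hVq : star v ⬝ᵥ V.mulVec v = ((starRingEnd ℂ) μ + μ) * c := by
      rw [← hLyap, ← quad_id, heig, Matrix.mulVec_smul, star_smul,
        smul_dotProduct, dotProduct_smul]
      simp only [smul_eq_mul, Complex.star_def]
      ring
    have hpos := hV.dotProduct_mulVec_pos hv0
    have hUneg := hNU.dotProduct_mulVec_pos hv0
    rw [Matrix.neg_mulVec, dotProduct_neg] at hUneg
    have hclt : c < 0 := by
      have := (Complex.lt_def.mp hUneg)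
      rw [Complex.lt_def]
      constructor
      · simpa using this.1
      · simpa using this.2.symm
    have hcre : c.re < 0 := (Complex.lt_def.mp hclt).1
    rw [hVq] at hpos
    have hre := (Complex.lt_def.mp hpos).1
    have haux : (starRingEnd ℂ) μ + μ = ((2 * μ.re : ℝ) : ℂ) := by
      rw [add_comm, Complex.add_conj]
    rw [haux, Complex.zero_re, Complex.re_ofReal_mul] at hre
    nlinarith
  · intro hA
    refine Matrix.PosDef.of_dotProduct_mulVec_pos hU.neg fun v hv => ?_
    have h1 := key_neg A U V hU hLyap hV hA v hv
    have h2 := herm_dot hU v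
    rw [Matrix.neg_mulVec, dotProduct_neg, Complex.lt_def]
    constructor
    · simpa using h1
    · simpa using h2
end
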